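/- arXiv:2512.12215 — 4 statements merged into one kernel-verified Lean document; each statement's English description precedes it below -/
import Mathlib

section
/- Let V be a finite vertex set and let G be a simple graph on V. Suppose some connected component of G is a tree, i.e., there is a vertex v such that no vertex reachable from v in G lies on a cycle of G. Then G is not admissible: there exists a nonzero function f : V → ℂ with f(u) + f(w) = 0 for every edge {u, w} of G. -/
open SimpleGraph

/-- Concatenating an edge to a path whose new endpoint is fresh gives a path. -/
private lemma aux_isPath_concat {W : Type*} {H : SimpleGraph W} {a x y : W}
    {p : H.Walk a x} (hp : p.IsPath) (e : H.Adj x y) (hy : y ∉ p.support) :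
    (p.concat e).IsPath := by
  rw [← Walk.isPath_reverse_iff, Walk.reverse_concat]
  refine Walk.IsPath.cons hp.reverse ?_
  simpa using hy

/-- In an acyclic graph, the lengths of the (unique) paths from a fixed vertex to the
two endpoints of an edge differ by exactly one. -/
private lemma aux_key {W : Type*} {H : SimpleGraph W} (hH : H.IsAcyclic) {a x y : W}
    (p : H.Path a x) (q : H.Path a y) (e : H.Adj x y) :
    q.1.length = p.1.length + 1 ∨ p.1.length = q.1.length + 1 := by
  classical
  by_cases hy : y ∈ p.1.support
  · by_cases hx : x ∈ q.1.support
    · exfalso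
      have h1 : q = ⟨p.1.takeUntil y hy, p.2.takeUntil hy⟩ := hH.path_unique _ _
      have h2 : p = ⟨q.1.takeUntil x hx, q.2.takeUntil hx⟩ := hH.path_unique _ _
      have l1 : q.1.length ≤ p.1.length := by
        rw [h1]; exact Walk.length_takeUntil_le _ hy
      have l2 : p.1.length ≤ q.1.length := by
        rw [h2]; exact Walk.length_takeUntil_le _ hx
      have hlen : q.1.length = p.1.length := le_antisymm l1 l2
      have hspec := congrArg Walk.length (p.1.take_spec hy)
      rw [Walk.length_append] at hspec
      have h1' : q.1.length = (p.1.takeUntil y hy).length := by rw [h1]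
      have hzero : (p.1.dropUntil y hy).length = 0 := by omega
      exact e.ne' (Walk.eq_of_length_eq_zero hzero)
    · right
      have hpath : (q.1.concat e.symm).IsPath := aux_isPath_concat q.2 e.symm hx
      have := hH.path_unique p ⟨q.1.concat e.symm, hpath⟩
      have : p.1 = q.1.concat e.symm := congrArg Subtype.val this
      rw [this, Walk.length_concat]
  · left
    have hpath : (p.1.concat e).IsPath := aux_isPath_concat p.2 e hy
    have := hH.path_unique q ⟨p.1.concat e, hpath⟩
    have : q.1 = p.1.concat e := congrArg Subtype.val this
    rw [this, Walk.length_concat]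

/-- A walk all of whose support lies in `s` lifts to reachability in the induced graph. -/
private lemma aux_lift {V : Type*} {G : SimpleGraph V} {s : Set V} :
    ∀ {a b : V} (p : G.Walk a b) (hp : ∀ x ∈ p.support, x ∈ s),
      (G.induce s).Reachable ⟨a, hp a p.start_mem_support⟩ ⟨b, hp b p.end_mem_support⟩ := by
  intro a b p
  induction p with
  | nil => intro _; rfl
  | cons h q ih =>
      intro hp
      have hp' : ∀ x ∈ q.support, x ∈ s := fun x hx => hp x (by simp [hx])
      have h1 : (G.induce s).Adj ⟨_, hp _ (Walk.start_mem_support _)⟩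
          ⟨_, hp' _ q.start_mem_support⟩ := by
        simpa using h
      exact (SimpleGraph.Adj.reachable h1).trans (ih hp')

/-- If some connected component of `G` is a tree (there is a vertex `v`
such that no vertex reachable from `v` lies on a cycle of `G`), then `G` is not
admissible. -/
theorem stmt_1 {V : Type*} [Fintype V] (G : SimpleGraph V)
    (v : V)
    (hv : ∀ u : V, G.Reachable v u → ¬ ∃ c : G.Walk u u, c.IsCycle) :
    ∃ f : V → ℂ, f ≠ 0 ∧ ∀ u w : V, G.Adj u w → f u + f w = 0 := by
  classical
  set s : Set V := {u | G.Reachable v u} with hs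
  set H : SimpleGraph s := G.induce s with hH
  -- H is acyclic
  have hacyc : H.IsAcyclic := by
    intro x c hc
    have hinj : Function.Injective (SimpleGraph.Embedding.induce (G := G) s) :=
      (SimpleGraph.Embedding.induce (G := G) s).injective
    have : (c.map (SimpleGraph.Embedding.induce (G := G) s).toHom).IsCycle := hc.map hinj
    exact hv x.1 x.2 ⟨_, this⟩
  -- v₀
  have hvs : v ∈ s := Reachable.refl v
  set v₀ : s := ⟨v, hvs⟩ with hv₀
  -- every vertex of s is reachable from v₀ in H
  have hreach : ∀ u : s, H.Reachable v₀ u := by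
    intro u
    obtain ⟨p⟩ := u.2
    have hp : ∀ x ∈ p.support, x ∈ s := by
      intro x hx
      exact ⟨p.takeUntil x hx⟩
    exact aux_lift p hp
  -- choose paths
  let P : ∀ u : s, H.Path v₀ u := fun u => ((hreach u).some).toPath
  let f : V → ℂ := fun u => if h : u ∈ s then (-1 : ℂ) ^ (P ⟨u, h⟩).1.length else 0
  refine ⟨f, ?_, ?_⟩
  · intro h0
    have : f v = 0 := congrFun h0 v
    rw [show f v = (-1 : ℂ) ^ (P v₀).1.length from dif_pos hvs] at this
    exact pow_ne_zero _ (by norm_num) this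
  · intro u w huw
    by_cases hu : u ∈ s
    · have hw : w ∈ s := hu.trans huw.reachable
      have he : H.Adj ⟨u, hu⟩ ⟨w, hw⟩ := by simpa [hH] using huw
      have := aux_key hacyc (P ⟨u, hu⟩) (P ⟨w, hw⟩) he
      have hfu : f u = (-1 : ℂ) ^ (P ⟨u, hu⟩).1.length := dif_pos hu
      have hfw : f w = (-1 : ℂ) ^ (P ⟨w, hw⟩).1.length := dif_pos hw
      rcases this with h | h <;> rw [hfu, hfw, h, pow_succ] <;> ring
    · have hw : w ∉ s := by
        intro hw
        exact hu (hw.trans huw.symm.reachable)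
      rw [show f u = 0 from dif_neg hu, show f w = 0 from dif_neg hw, add_zero]
end

section
/- Let V be a finite vertex set and let G be a simple graph on V satisfying: (1) every vertex of V lies on at least one edge of G; (2) G contains no even cycle (every cycle of G has odd length); and (3) no connected component of G is a tree (every vertex of V can reach, within its component, some vertex lying on a cycle of G). Then G is admissible: the only function f : V → ℂ with f(u) + f(v) = 0 for every edge {u, v} of G is the zero function. -/
/-- If every vertex lies on an edge, `G` has no even cycle, and no
connected component of `G` is a tree (every vertex can reach a vertex lying on a
cycle), then `G` is admissible. -/
theorem stmt_4 {V : Type*} [Fintype V] (G : SimpleGraph V)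
    (h1 : ∀ v : V, ∃ u : V, G.Adj v u)
    (h2 : ∀ (v : V) (c : G.Walk v v), c.IsCycle → Odd c.length)
    (h3 : ∀ v : V, ∃ u : V, G.Reachable v u ∧ ∃ c : G.Walk u u, c.IsCycle)
    (f : V → ℂ) (hf : ∀ u w : V, G.Adj u w → f u + f w = 0) :
    f = 0 := by
  have key : ∀ {v u : V} (p : G.Walk v u), f v = (-1 : ℂ) ^ p.length * f u := by
    intro v u p
    induction p with
    | nil => simp
    | cons h p ih =>
      have hvw := hf _ _ h
      simp only [SimpleGraph.Walk.length_cons]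
      linear_combination hvw - ih
  have hzero : ∀ u : V, (∃ c : G.Walk u u, c.IsCycle) → f u = 0 := by
    rintro u ⟨c, hc⟩
    have hk := key c
    obtain ⟨k, hk2⟩ := h2 u c hc
    rw [hk2] at hk
    have : (-1 : ℂ) ^ (2 * k + 1) = -1 := by
      rw [pow_succ, pow_mul]; simp
    rw [this] at hk
    linear_combination hk / 2
  funext v
  obtain ⟨u, hr, hc⟩ := h3 v
  obtain ⟨p⟩ := hr
  have := key p
  rw [hzero u hc, mul_zero] at this
  simpa using this
end

section
/- Let V be a finite vertex set and let G be a simple graph on V whose number of edges is at most the number of vertices of V. Suppose some connected component of G contains two distinct odd cycles; that is, there exist cycles p and q in G, both of odd length, whose edge sets are different, and whose base vertices lie in the same connected component of G. Then G is not admissible: there exists a nonzero function f : V → ℂ with f(u) + f(v) = 0 for every edge {u, v} of G. -/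
open SimpleGraph

private def altsum {V : Type*} (g : Sym2 V → ℂ) : List (Sym2 V) → ℂ
  | [] => 0
  | e :: l => g e - altsum g l

private lemma altsum_parity {V : Type*} [DecidableEq V] (e₀ : Sym2 V)
    (l : List (Sym2 V)) :
    ∃ m : ℤ, altsum (fun e => if e = e₀ then 1 else 0) l = (l.count e₀ : ℤ) + 2 * m := by
  induction l with
  | nil => exact ⟨0, by simp [altsum]⟩
  | cons e l ih =>
    obtain ⟨m, hm⟩ := ih
    refine ⟨-m - l.count e₀, ?_⟩
    rw [altsum, hm, List.count_cons]
    by_cases h : e = e₀ <;> simp [h] <;> push_cast <;> ring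

private lemma walk_altsum {V : Type*} {G : SimpleGraph V} (g : Sym2 V → ℂ)
    (f : V → ℂ) (hf : ∀ a b : V, G.Adj a b → f a + f b = g s(a, b))
    {a b : V} (w : G.Walk a b) :
    f a = altsum g w.edges + (-1 : ℂ) ^ w.length * f b := by
  induction w with
  | nil => simp [altsum]
  | @cons x y z h w ih =>
    have h1 : f x + f y = g s(x, y) := hf x y h
    rw [Walk.edges_cons, Walk.length_cons, altsum]
    linear_combination h1 - ih

private lemma walk_int {V : Type*} [DecidableEq V] {G : SimpleGraph V} (e₀ : Sym2 V)
    (f : V → ℂ) (hf : ∀ a b : V, G.Adj a b → f a + f b = if s(a, b) = e₀ then 1 else 0)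
    {a b : V} (w : G.Walk a b) (ha : ∃ k : ℤ, f a = k) : ∃ k : ℤ, f b = k := by
  induction w with
  | nil => exact ha
  | @cons x y z h w ih =>
    apply ih
    obtain ⟨k, hk⟩ := ha
    have h1 := hf x y h
    by_cases he : s(x, y) = e₀
    · exact ⟨1 - k, by rw [if_pos he] at h1; push_cast; linear_combination h1 - hk⟩
    · exact ⟨-k, by rw [if_neg he] at h1; push_cast; linear_combination h1 - hk⟩

private lemma key {V : Type*} [DecidableEq V] {G : SimpleGraph V}
    (f : V → ℂ) (e₀ : Sym2 V)
    (hf : ∀ a b : V, G.Adj a b → f a + f b = if s(a, b) = e₀ then 1 else 0)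
    {u v : V} (p : G.Walk u u) (q : G.Walk v v)
    (hp : p.IsCycle)
    (hpodd : Odd p.length) (hqodd : Odd q.length)
    (he₀p : e₀ ∈ p.edges) (he₀q : e₀ ∉ q.edges)
    (hreach : G.Reachable v u) : False := by
  have hfg : ∀ a b : V, G.Adj a b →
      f a + f b = (fun e => if e = e₀ then 1 else 0) s(a, b) := hf
  set g : Sym2 V → ℂ := fun e => if e = e₀ then 1 else 0 with hg
  -- from the cycle q : 2 * f v = altsum over q, which is even
  have hq2 : f v = altsum g q.edges + (-1 : ℂ) ^ q.length * f v :=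
    walk_altsum g f hfg q
  rw [hqodd.neg_one_pow] at hq2
  obtain ⟨mq, hmq⟩ := altsum_parity e₀ q.edges
  rw [List.count_eq_zero_of_not_mem he₀q, ← hg] at hmq
  push_cast at hmq
  have hv : ∃ k : ℤ, f v = k := ⟨mq, by linear_combination (hq2 + hmq) / 2⟩
  -- propagate integrality to u
  obtain ⟨k, hk⟩ := walk_int e₀ f hf hreach.some hv
  -- from the cycle p : 2 * f u = altsum over p, which is odd
  have hp2 : f u = altsum g p.edges + (-1 : ℂ) ^ p.length * f u :=
    walk_altsum g f hfg p
  rw [hpodd.neg_one_pow] at hp2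
  obtain ⟨mp, hmp⟩ := altsum_parity e₀ p.edges
  rw [List.count_eq_one_of_mem hp.edges_nodup he₀p, ← hg] at hmp
  have : (2 * k : ℂ) = 1 + 2 * mp := by
    linear_combination hp2 + hmp - 2 * hk
  have : (2 * k : ℤ) = 1 + 2 * mp := by exact_mod_cast this
  omega

/-- If `G` has at most as many edges as vertices and some connected
component contains two distinct odd cycles (cycles of odd length with different edge
sets whose base vertices are in the same component), then `G` is not admissible. -/
theorem stmt_5 {V : Type*} [Fintype V] [DecidableEq V] (G : SimpleGraph V)
    (hcard : G.edgeSet.ncard ≤ Fintype.card V)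
    (u v : V) (p : G.Walk u u) (q : G.Walk v v)
    (hp : p.IsCycle) (hq : q.IsCycle)
    (hpodd : Odd p.length) (hqodd : Odd q.length)
    (hne : p.edges.toFinset ≠ q.edges.toFinset)
    (hreach : G.Reachable u v) :
    ∃ f : V → ℂ, f ≠ 0 ∧ ∀ a b : V, G.Adj a b → f a + f b = 0 := by
  by_contra hcon
  push_neg at hcon
  have hker : ∀ f : V → ℂ, (∀ a b : V, G.Adj a b → f a + f b = 0) → f = 0 := by
    intro f hf
    by_contra hf0
    obtain ⟨a, b, hab, hne'⟩ := hcon f hf0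
    exact hne' (hf a b hab)
  -- set up the linear map
  classical
  haveI : Fintype ↥G.edgeSet := Fintype.ofFinite _
  let φ : (V → ℂ) →ₗ[ℂ] (↥G.edgeSet → ℂ) :=
    { toFun := fun f e => Sym2.lift ⟨fun a b => f a + f b, fun a b => by ring⟩ e.1
      map_add' := by
        intro f g
        funext e
        obtain ⟨e, he⟩ := e
        induction e using Sym2.inductionOn with
        | _ a b => simp [Sym2.lift_mk]; ring
      map_smul' := by
        intro c f
        funext e
        obtain ⟨e, he⟩ := e
        induction e using Sym2.inductionOn with
        | _ a b => simp [Sym2.lift_mk]; ring }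
  have hφval : ∀ (f : V → ℂ) (a b : V) (h : G.Adj a b),
      φ f ⟨s(a, b), (G.mem_edgeSet).2 h⟩ = f a + f b := by
    intro f a b h
    simp [φ]
  have hinj : Function.Injective φ := by
    rw [← LinearMap.ker_eq_bot, LinearMap.ker_eq_bot']
    intro f hf
    apply hker
    intro a b hab
    have := congrFun hf ⟨s(a, b), (G.mem_edgeSet).2 hab⟩
    rw [hφval f a b hab] at this
    exact this
  have hd1 : Module.finrank ℂ (V → ℂ) = Fintype.card V :=
    Module.finrank_fintype_fun_eq_card ℂ
  have hd2 : Module.finrank ℂ (↥G.edgeSet → ℂ) = G.edgeSet.ncard := by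
    rw [Module.finrank_fintype_fun_eq_card ℂ, ← Nat.card_coe_set_eq,
      Nat.card_eq_fintype_card]
  have hle : Module.finrank ℂ (V → ℂ) ≤ Module.finrank ℂ (↥G.edgeSet → ℂ) :=
    LinearMap.finrank_le_finrank_of_injective hinj
  have heq : Module.finrank ℂ (V → ℂ) = Module.finrank ℂ (↥G.edgeSet → ℂ) := by
    omega
  have hsurj : Function.Surjective φ :=
    (LinearMap.injective_iff_surjective_of_finrank_eq_finrank heq).1 hinj
  -- pick an edge in the symmetric difference
  have : ∃ e₀ : Sym2 V, (e₀ ∈ p.edges ∧ e₀ ∉ q.edges) ∨ (e₀ ∈ q.edges ∧ e₀ ∉ p.edges) := by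
    by_contra h
    push_neg at h
    apply hne
    ext e
    simp only [List.mem_toFinset]
    have := h e
    tauto
  obtain ⟨e₀, he₀⟩ := this
  obtain ⟨f, hfφ⟩ := hsurj (fun e => if e.1 = e₀ then 1 else 0)
  have hf : ∀ a b : V, G.Adj a b → f a + f b = if s(a, b) = e₀ then 1 else 0 := by
    intro a b hab
    have := congrFun hfφ ⟨s(a, b), (G.mem_edgeSet).2 hab⟩
    rw [hφval f a b hab] at this
    exact this
  rcases he₀ with ⟨h1, h2⟩ | ⟨h1, h2⟩
  · exact key f e₀ hf p q hp hpodd hqodd h1 h2 hreach.symm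
  · exact key f e₀ hf q p hq hqodd hpodd h1 h2 hreach
end

section
/- Let V be a finite vertex set and let G be an admissible simple graph on V whose number of edges equals the number of vertices of V. Then every cycle of G has odd length, and every connected component of G contains a cycle (equivalently, each connected component consists of a single odd cycle together with trees attached to its vertices). -/
open SimpleGraph

private lemma aux_edge_path {V : Type*} {G : SimpleGraph V} {u : V} :
    ∀ {b : V} (q : G.Walk b u), q.IsPath → s(u, b) ∈ q.edges → q.length = 1 := by
  intro b q
  induction q with
  | nil => intro _ he; simp at he
  | @cons b c u' h' r ih =>
    intro hp he
    rw [SimpleGraph.Walk.edges_cons, List.mem_cons] at he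
    rcases he with he | he
    · rw [Sym2.eq_iff] at he
      rcases he with ⟨rfl, rfl⟩ | ⟨rfl, -⟩
      · exact absurd rfl h'.ne
      · have : r = SimpleGraph.Walk.nil := SimpleGraph.Walk.isPath_iff_eq_nil.mp hp.of_cons
        subst this
        simp
    · exfalso
      have hb : b ∈ r.support := SimpleGraph.Walk.snd_mem_support_of_mem_edges r he
      have := hp.support_nodup
      rw [SimpleGraph.Walk.support_cons, List.nodup_cons] at this
      exact this.1 hb

private lemma aux_odd_cycle {V : Type*} {G : SimpleGraph V} :
    ∀ (n : ℕ) (u : V) (p : G.Walk u u), p.length ≤ n → Odd p.length →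
      ∃ (x : V) (c : G.Walk x x), c.IsCycle ∧ G.Reachable u x := by
  classical
  intro n
  induction n with
  | zero =>
    intro u p hl ho
    obtain ⟨k, hk⟩ := ho
    omega
  | succ n ih =>
    intro u p hl ho
    cases p with
    | nil => simp [Nat.odd_iff] at ho
    | @cons _ b _ h q =>
      by_cases hq : q.support.Nodup
      · by_cases he : s(u, b) ∈ q.edges
        · have h1 : q.length = 1 :=
            aux_edge_path q ((SimpleGraph.Walk.isPath_def q).mpr hq) he
          rw [SimpleGraph.Walk.length_cons, h1] at ho
          simp [Nat.odd_iff] at ho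
        · exact ⟨u, SimpleGraph.Walk.cons h q,
            (SimpleGraph.Walk.cons_isCycle_iff q h).mpr ⟨(SimpleGraph.Walk.isPath_def q).mpr hq, he⟩,
            Reachable.refl u⟩
      · obtain ⟨x, hdup⟩ := List.exists_duplicate_iff_not_nodup.mpr hq
        have hcount : 2 ≤ q.support.count x := List.duplicate_iff_two_le_count.mp hdup
        have hx : x ∈ q.support := List.count_pos_iff.mp (by omega)
        have hreachux : G.Reachable u x :=
          ⟨(SimpleGraph.Walk.cons h q).takeUntil x (by
            rw [SimpleGraph.Walk.support_cons]; exact List.mem_cons_of_mem _ hx)⟩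
        have hsupp : (q.takeUntil x hx).support ++ (q.dropUntil x hx).support.tail
            = q.support := by
          rw [← SimpleGraph.Walk.support_append, SimpleGraph.Walk.take_spec]
        have hcount1 : (q.takeUntil x hx).support.count x = 1 :=
          SimpleGraph.Walk.count_support_takeUntil_eq_one q hx
        have hxd : x ∈ (q.dropUntil x hx).support.tail := by
          have := hsupp ▸ hcount
          rw [List.count_append, hcount1] at this
          exact List.count_pos_iff.mp (by omega)
        have hlen : (q.takeUntil x hx).length + (q.dropUntil x hx).length = q.length := by
          rw [← SimpleGraph.Walk.length_append, SimpleGraph.Walk.take_spec]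
        have hdnotnil : ¬ (q.dropUntil x hx).Nil := by
          intro hnil
          rw [SimpleGraph.Walk.nil_iff_support_eq] at hnil
          rw [hnil] at hxd
          simp at hxd
        obtain ⟨y, h2, d2, hd2⟩ := SimpleGraph.Walk.not_nil_iff.mp hdnotnil
        have hxd2 : x ∈ d2.support := by
          rw [hd2, SimpleGraph.Walk.support_cons] at hxd
          exact hxd
        -- the two pieces
        set c0 : G.Walk x x := SimpleGraph.Walk.cons h2 (d2.takeUntil x hxd2) with hc0
        set p' : G.Walk u u :=
          SimpleGraph.Walk.cons h ((q.takeUntil x hx).append (d2.dropUntil x hxd2)) with hp'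
        have hlen2 : (d2.takeUntil x hxd2).length + (d2.dropUntil x hxd2).length = d2.length := by
          rw [← SimpleGraph.Walk.length_append, SimpleGraph.Walk.take_spec]
        have hdlen : (q.dropUntil x hx).length = d2.length + 1 := by
          rw [hd2, SimpleGraph.Walk.length_cons]
        have hsum : c0.length + p'.length = (SimpleGraph.Walk.cons h q).length := by
          rw [hc0, hp']
          simp only [SimpleGraph.Walk.length_cons, SimpleGraph.Walk.length_append]
          omega
        have hc0pos : 1 ≤ c0.length := by rw [hc0]; simp [SimpleGraph.Walk.length_cons]
        have hp'pos : 1 ≤ p'.length := by rw [hp']; simp [SimpleGraph.Walk.length_cons]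
        have hOsum : Odd (c0.length + p'.length) := hsum ▸ ho
        have hcase : c0.length % 2 = 1 ∨ p'.length % 2 = 1 := by
          have := Nat.odd_iff.mp hOsum; omega
        have hple : (SimpleGraph.Walk.cons h q).length ≤ n + 1 := hl
        rcases hcase with hco | hpo
        · obtain ⟨z, c, hc, hr⟩ := ih x c0 (by omega) (Nat.odd_iff.mpr hco)
          exact ⟨z, c, hc, hreachux.trans hr⟩
        · exact ih u p' (by omega) (Nat.odd_iff.mpr hpo)

private lemma aux_alt {V : Type*} {H : SimpleGraph V} {f : V → ℂ}
    (hf : ∀ u w : V, H.Adj u w → f u + f w = 0) :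
    ∀ {a c : V} (p : H.Walk a c), f c = (-1) ^ p.length * f a := by
  intro a c p
  induction p with
  | nil => simp
  | @cons a b c h r ih =>
    have hab := hf a b h
    rw [SimpleGraph.Walk.length_cons, ih]
    have hfb : f b = -f a := by linear_combination hab
    rw [hfb]
    ring

private lemma aux_card_le {V : Type*} [Fintype V] (H : SimpleGraph V)
    (hadm : ∀ f : V → ℂ, (∀ u w : V, H.Adj u w → f u + f w = 0) → f = 0) :
    Fintype.card V ≤ H.edgeSet.ncard := by
  classical
  have hfin : H.edgeSet.Finite := Set.toFinite _
  haveI : Fintype H.edgeSet := hfin.fintype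
  let L : (V → ℂ) →ₗ[ℂ] (H.edgeSet → ℂ) :=
    { toFun := fun f e => Sym2.lift ⟨fun a b => f (a) + f (b), fun a b => by ring⟩ e.1
      map_add' := by
        intro f g
        funext e
        obtain ⟨e, he⟩ := e
        induction e with
        | h a b => simp; ring
      map_smul' := by
        intro c f
        funext e
        obtain ⟨e, he⟩ := e
        induction e with
        | h a b => simp; ring }
  have hinj : Function.Injective L := by
    rw [injective_iff_map_eq_zero]
    intro f hf
    apply hadm
    intro u w huw
    have := congrFun hf ⟨s(u, w), huw⟩
    simpa [L] using this
  have hle := LinearMap.finrank_le_finrank_of_injective hinj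
  rw [Module.finrank_pi, Module.finrank_pi] at hle
  rwa [← Nat.card_coe_set_eq, Nat.card_eq_fintype_card]

/-- If `G` is admissible and its number of edges equals its number of
vertices, then every cycle of `G` is odd and every connected component of `G`
contains a cycle. -/
theorem stmt_6 {V : Type*} [Fintype V] (G : SimpleGraph V)
    (hadm : ∀ f : V → ℂ, (∀ u w : V, G.Adj u w → f u + f w = 0) → f = 0)
    (hcard : G.edgeSet.ncard = Fintype.card V) :
    (∀ (v : V) (c : G.Walk v v), c.IsCycle → Odd c.length) ∧
    (∀ v : V, ∃ u : V, G.Reachable v u ∧ ∃ c : G.Walk u u, c.IsCycle) := by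
  classical
  constructor
  · -- every cycle is odd
    intro v c hc
    by_contra hodd
    have heven : Even c.length := Nat.not_odd_iff_even.mp hodd
    cases c with
    | nil => exact absurd rfl hc.ne_nil
    | @cons _ b _ h q =>
      obtain ⟨hqpath, hqe⟩ := (SimpleGraph.Walk.cons_isCycle_iff q h).mp hc
      have hqodd : Odd q.length := by
        rw [SimpleGraph.Walk.length_cons, Nat.even_add_one, Nat.not_even_iff_odd] at heven
        exact heven
      set G' : SimpleGraph V := G.deleteEdges {s(v, b)} with hG'
      have hqG' : ∀ e ∈ q.edges, e ∈ G'.edgeSet := by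
        intro e he
        rw [hG', SimpleGraph.edgeSet_deleteEdges]
        exact ⟨q.edges_subset_edgeSet he, by
          simp only [Set.mem_singleton_iff]
          rintro rfl
          exact hqe he⟩
      set q' : G'.Walk b v := q.transfer G' hqG' with hq'
      have hadm' : ∀ f : V → ℂ, (∀ u w : V, G'.Adj u w → f u + f w = 0) → f = 0 := by
        intro f hf
        apply hadm
        intro u w huw
        by_cases hne : s(u, w) = s(v, b)
        · have hkey : f v + f b = 0 := by
            have halt := aux_alt hf q'
            have hlen : q'.length = q.length := SimpleGraph.Walk.length_transfer q hqG'
            rw [hlen, Odd.neg_one_pow hqodd] at halt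
            linear_combination halt
          rw [Sym2.eq_iff] at hne
          rcases hne with ⟨rfl, rfl⟩ | ⟨rfl, rfl⟩
          · exact hkey
          · linear_combination hkey
        · refine hf u w ?_
          rw [hG', SimpleGraph.deleteEdges_adj]
          exact ⟨huw, by simpa using hne⟩
      have hle := aux_card_le G' hadm'
      have hmem : s(v, b) ∈ G.edgeSet := h
      have hG'card : G'.edgeSet.ncard = G.edgeSet.ncard - 1 := by
        rw [hG', SimpleGraph.edgeSet_deleteEdges]
        exact Set.ncard_diff_singleton_of_mem hmem
      have hpos : 0 < Fintype.card V := Fintype.card_pos_iff.mpr ⟨v⟩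
      omega
  · -- every component contains a cycle
    intro v
    by_contra hcon
    push_neg at hcon
    set f : V → ℂ := fun u => if G.Reachable v u then (-1 : ℂ) ^ (G.dist v u) else 0 with hfdef
    have hker : ∀ u w : V, G.Adj u w → f u + f w = 0 := by
      intro u w huw
      by_cases hu : G.Reachable v u
      · have hw : G.Reachable v w := hu.trans huw.reachable
        have hpar : Odd (G.dist v u + G.dist v w) := by
          rw [Nat.odd_iff, ← Nat.not_even_iff]
          intro heven
          obtain ⟨p, hp⟩ := hu.exists_walk_length_eq_dist
          obtain ⟨r, hr⟩ := hw.exists_walk_length_eq_dist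
          set W : G.Walk v v := p.append (SimpleGraph.Walk.cons huw r.reverse) with hW
          have hWlen : W.length = G.dist v u + (G.dist v w + 1) := by
            rw [hW, SimpleGraph.Walk.length_append, SimpleGraph.Walk.length_cons,
              SimpleGraph.Walk.length_reverse, hp, hr]
          have hWodd : Odd W.length := by
            rw [hWlen, Nat.odd_iff]
            obtain ⟨k, hk⟩ := heven
            omega
          obtain ⟨x, c, hcyc, hreach⟩ := aux_odd_cycle W.length v W le_rfl hWodd
          exact hcon x hreach c hcyc
        have h1 : (-1 : ℂ) ^ (G.dist v u) * (-1 : ℂ) ^ (G.dist v w) = -1 := by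
          rw [← pow_add]
          exact Odd.neg_one_pow hpar
        have h2 : (-1 : ℂ) ^ (G.dist v w) * (-1 : ℂ) ^ (G.dist v w) = 1 := by
          rw [← pow_add]
          exact Even.neg_one_pow ⟨G.dist v w, rfl⟩
        rw [hfdef]
        simp only [if_pos hu, if_pos hw]
        linear_combination ((-1 : ℂ) ^ (G.dist v w)) * h1 - ((-1 : ℂ) ^ (G.dist v u)) * h2
      · have hw : ¬ G.Reachable v w := fun hw => hu (hw.trans huw.symm.reachable)
        rw [hfdef]
        simp [if_neg hu, if_neg hw]
    have hzero := hadm f hker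
    have hfv : f v = 1 := by
      rw [hfdef]
      simp [SimpleGraph.Reachable.refl, SimpleGraph.dist_self]
    rw [hzero] at hfv
    exact one_ne_zero hfv.symm
end
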